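/- Let $\mathcal{B}$ be a separable subset of $B(\ell^2)$. Then there exist integers $0 = r_1 < r_2 < \cdots$ such that for every $T \in \mathcal{B}$, the operator $T - \sum_{k=1}^\infty (Q_{k-1} + Q_k + Q_{k+1}) T Q_k$ is compact, where $Q_0 = 0$ and $Q_k$ is the orthogonal projection of $\ell^2$ onto $\ell^2([r_k+1, r_{k+1}])$, and the series converges in the strong operator topology. In other words, every operator in $\mathcal{B}$ is simultaneously block-tridiagonalizable up to compact perturbation with respect to a single decomposition of $\ell^2$ into finite dimensional blocks. -/

import Mathlib

open scoped ENNReal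
noncomputable section
namespace Paper

instance : Fact ((1:ℝ≥0∞) ≤ 2) := ⟨one_le_two⟩

section lpMaps
variable {E : ℕ → Type*} [∀ i, NormedAddCommGroup (E i)] [∀ i, NormedSpace ℂ (E i)]

/-- Canonical coordinate projection `Q i` from the `ℓᵖ`-direct sum onto `E i`. -/
def lpProj (p : ℝ≥0∞) [Fact (1 ≤ p)] (i : ℕ) : lp E p →L[ℂ] E i :=
  LinearMap.mkContinuous
    { toFun := fun f => f i
      map_add' := fun f g => rfl
      map_smul' := fun c f => rfl }
    1 fun f => by
      have h1 : (1:ℝ≥0∞) ≤ p := Fact.out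
      have hp0 : p ≠ 0 := by intro h; rw [h] at h1; simp at h1
      simp only [one_mul]
      exact lp.norm_apply_le_norm hp0 f i

/-- Canonical inclusion `J i` of `E i` into the `ℓᵖ`-direct sum. -/
def lpIncl (p : ℝ≥0∞) [Fact (1 ≤ p)] (hp : p ≠ ⊤) (i : ℕ) : E i →L[ℂ] lp E p :=
  LinearMap.mkContinuous
    { toFun := fun a => lp.single p i a
      map_add' := fun a b => by
        apply lp.ext; funext j
        by_cases h : j = i
        · subst h
          simp [lp.single_apply_self, lp.coeFn_add]
        · simp [lp.single_apply_ne p i _ h, lp.coeFn_add]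
      map_smul' := fun c a => lp.single_smul p i c a }
    1 fun a => by
      have h1 : (1:ℝ≥0∞) ≤ p := Fact.out
      have hp0 : p ≠ 0 := by intro h; rw [h] at h1; simp at h1
      have hpt : 0 < p.toReal := ENNReal.toReal_pos hp0 hp
      have := lp.norm_single (E := E) (p := p) (ENNReal.toReal_pos_iff.mp hpt).1 i a
      exact le_of_eq (by simpa using this)

end lpMaps

section Fredholm
variable {X Y : Type*} [NormedAddCommGroup X] [NormedSpace ℂ X]
  [NormedAddCommGroup Y] [NormedSpace ℂ Y]

/-- A bounded operator is Fredholm if its kernel is finite dimensional and its range has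
finite codimension. -/
def IsFredholm (T : X →L[ℂ] Y) : Prop :=
  FiniteDimensional ℂ (LinearMap.ker (T : X →ₗ[ℂ] Y)) ∧ FiniteDimensional ℂ (Y ⧸ LinearMap.range (T : X →ₗ[ℂ] Y))

/-- The Fredholm index `dim ker T - codim ran T`. -/
def fredholmIndex (T : X →L[ℂ] Y) : ℤ :=
  (Module.finrank ℂ (LinearMap.ker (T : X →ₗ[ℂ] Y)) : ℤ) - (Module.finrank ℂ (Y ⧸ LinearMap.range (T : X →ₗ[ℂ] Y)) : ℤ)

/-- The essential norm: the distance to the compact operators. -/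
def essNorm (T : X →L[ℂ] Y) : ℝ :=
  ⨅ K : {K : X →L[ℂ] Y // IsCompactOperator ⇑K}, ‖T - (K : X →L[ℂ] Y)‖

end Fredholm

/-- The canonical projection of `ℓ²` onto the coordinates in `[r k, r (k+1))`. -/
def blockProj (r : ℕ → ℕ) (k : ℕ) :
    lp (fun _ : ℕ => ℂ) 2 →L[ℂ] lp (fun _ : ℕ => ℂ) 2 :=
  ∑ i ∈ Finset.Ico (r k) (r (k+1)),
    (lpIncl (E := fun _ : ℕ => ℂ) 2 (by norm_num) i).comp (lpProj 2 i)


/-- `ℓ²(ℕ)`. -/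
abbrev L2 := lp (fun _ : ℕ => ℂ) 2

/-- `ℓᵖ(ℕ)`. -/
abbrev Lp (p : ℝ≥0∞) := lp (fun _ : ℕ => ℂ) p

/-- The blocks `ℓ²([r k, r (k+1)))` as abstract finite dimensional Hilbert spaces. -/
abbrev Eb (r : ℕ → ℕ) : ℕ → Type := fun k => EuclideanSpace ℂ (Fin (r (k+1) - r k))


section Infra
open Filter Finset

local notation "Op" => (L2 →L[ℂ] L2)

/-- projection onto the coordinates in a finite set `s`. -/
def cproj (s : Finset ℕ) : Op :=
  ∑ i ∈ s, (lpIncl (E := fun _ : ℕ => ℂ) 2 (by norm_num) i).comp (lpProj 2 i)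

lemma blockProj_eq (r : ℕ → ℕ) (k : ℕ) :
    blockProj r k = cproj (Finset.Ico (r k) (r (k+1))) := rfl

lemma cproj_apply (s : Finset ℕ) (x : L2) (j : ℕ) :
    cproj s x j = if j ∈ s then x j else 0 := by
  have h : cproj s x = ∑ i ∈ s, lp.single 2 i (x i) := by
    rw [cproj, ContinuousLinearMap.sum_apply]
    refine Finset.sum_congr rfl fun i _ => ?_
    rfl
  have h2 : (cproj s x) j = ∑ i ∈ s, (lp.single 2 i (x i) : L2) j := by
    rw [h]
    exact map_sum (lpProj (E := fun _ : ℕ => ℂ) 2 j) _ s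
  rw [h2]
  rw [Finset.sum_congr rfl (fun i _ => ?_)]
  · exact Finset.sum_ite_eq s j (fun i => x i)
  · show (lp.single 2 i (x i) : L2) j = if j = i then x i else 0
    by_cases hji : j = i
    · subst hji; simp [lp.single_apply_self]
    · simp [lp.single_apply_ne 2 i _ hji, hji]

end Infra
section Infra2
open Filter Finset

lemma hasSum_nsq (f : L2) : HasSum (fun i => ‖f i‖^2) (‖f‖^2) := by
  have h := lp.hasSum_norm (E := fun _ : ℕ => ℂ) (p := 2) (by norm_num) f
  have e : ((2:ℝ≥0∞).toReal) = (2:ℝ) := by norm_num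
  rw [e] at h
  convert h using 2 <;> rw [← Real.rpow_natCast] <;> norm_num

lemma nsq_eq_nsq_of_coords {f g : L2} (h : ∀ j, ‖f j‖ = ‖g j‖) : ‖f‖^2 = ‖g‖^2 := by
  refine (hasSum_nsq f).unique ?_
  have : (fun i => ‖f i‖^2) = fun i => ‖g i‖^2 := funext fun j => by rw [h j]
  rw [this]; exact hasSum_nsq g

lemma norm_le_of_nsq_le {f : L2} {c : ℝ} (h : ‖f‖^2 ≤ c^2) (hc : 0 ≤ c) : ‖f‖ ≤ c := by
  nlinarith [norm_nonneg f]

lemma coe_sum_apply (s : Finset ℕ) (g : ℕ → L2) (j : ℕ) :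
    (∑ k ∈ s, g k : L2) j = ∑ k ∈ s, (g k) j :=
  map_sum (lpProj (E := fun _ : ℕ => ℂ) 2 j) _ s

/-- Pythagoras for finitely many disjointly supported vectors. -/
lemma pyth (s : Finset ℕ) (g : ℕ → L2)
    (hd : ∀ k ∈ s, ∀ l ∈ s, k ≠ l → ∀ j, g k j = 0 ∨ g l j = 0) :
    ‖∑ k ∈ s, g k‖^2 = ∑ k ∈ s, ‖g k‖^2 := by
  have h1 : HasSum (fun j => ‖(∑ k ∈ s, g k : L2) j‖^2) (‖∑ k ∈ s, g k‖^2) := hasSum_nsq _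
  have h2 : HasSum (fun j => ∑ k ∈ s, ‖(g k) j‖^2) (∑ k ∈ s, ‖g k‖^2) :=
    hasSum_sum (fun k _ => hasSum_nsq (g k))
  refine h1.unique ?_
  have hpt : ∀ j, ‖(∑ k ∈ s, g k : L2) j‖^2 = ∑ k ∈ s, ‖(g k) j‖^2 := by
    intro j
    rw [coe_sum_apply]
    by_cases hex : ∃ k ∈ s, (g k) j ≠ 0
    · obtain ⟨k₀, hk₀, hgk₀⟩ := hex
      have hz : ∀ l ∈ s, l ≠ k₀ → (g l) j = 0 := by
        intro l hl hne
        rcases hd l hl k₀ hk₀ hne j with h | h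
        · exact h
        · exact absurd h hgk₀
      rw [Finset.sum_eq_single_of_mem k₀ hk₀ hz,
        Finset.sum_eq_single_of_mem k₀ hk₀ (fun l hl hne => by rw [hz l hl hne]; simp)]
    · push_neg at hex
      rw [Finset.sum_eq_zero (fun l hl => hex l hl),
        Finset.sum_eq_zero (fun l hl => by rw [hex l hl]; simp)]
      simp
  rw [show (fun j => ∑ k ∈ s, ‖(g k) j‖^2) = (fun j => ‖(∑ k ∈ s, g k : L2) j‖^2) from funext fun j => (hpt j).symm] at h2
  exact h2

lemma nsq_cproj_le (s : Finset ℕ) (x : L2) : ‖cproj s x‖^2 ≤ ‖x‖^2 := by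
  refine hasSum_le (fun j => ?_) (hasSum_nsq (cproj s x)) (hasSum_nsq x)
  rw [cproj_apply]
  split_ifs
  · exact le_refl _
  · rw [norm_zero]
    nlinarith [norm_nonneg (x j)]

lemma norm_cproj_le (s : Finset ℕ) (x : L2) : ‖cproj s x‖ ≤ ‖x‖ :=
  norm_le_of_nsq_le (nsq_cproj_le s x) (norm_nonneg x)

lemma cproj_cproj (s t : Finset ℕ) (x : L2) :
    cproj s (cproj t x) = cproj (s ∩ t) x := by
  apply lp.ext; funext j
  simp only [cproj_apply, Finset.mem_inter]
  split_ifs with h1 h2 h3 h3 <;> tauto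

lemma cproj_empty (x : L2) : cproj (∅ : Finset ℕ) x = 0 := by
  simp [cproj]

lemma sub_cproj_apply (s : Finset ℕ) (x : L2) (j : ℕ) :
    (x - cproj s x : L2) j = if j ∈ s then 0 else x j := by
  have : (x - cproj s x : L2) j = x j - cproj s x j := by
    rw [lp.coeFn_sub]; rfl
  rw [this, cproj_apply]
  split_ifs <;> simp

lemma nsq_sub_cproj (m : ℕ) (x : L2) :
    ‖x - cproj (Finset.range m) x‖^2 = ‖x‖^2 - ∑ j ∈ Finset.range m, ‖x j‖^2 := by
  have hu : HasSum (fun j => if j ∈ Finset.range m then ‖x j‖^2 else 0)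
      (∑ j ∈ Finset.range m, ‖x j‖^2) := by
    have := hasSum_sum_of_ne_finset_zero (L := SummationFilter.unconditional ℕ)
      (f := fun j => if j ∈ Finset.range m then ‖x j‖^2 else 0) (s := Finset.range m)
      (fun j hj => by simp only [if_neg hj])
    convert this using 1
    exact (Finset.sum_congr rfl (fun j hj => by simp only [if_pos hj])).symm
  have h := (hasSum_nsq x).sub hu
  refine ((hasSum_nsq _).unique ?_).symm.symm
  convert h using 1
  · rfl
  funext j
  rw [sub_cproj_apply]
  split_ifs <;> simp

lemma norm_sub_cproj_le (m : ℕ) (x : L2) : ‖x - cproj (Finset.range m) x‖ ≤ ‖x‖ := by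
  refine norm_le_of_nsq_le ?_ (norm_nonneg x)
  rw [nsq_sub_cproj]
  have : (0:ℝ) ≤ ∑ j ∈ Finset.range m, ‖x j‖^2 := by positivity
  linarith

lemma tendsto_tail (x : L2) :
    Filter.Tendsto (fun m => ‖x - cproj (Finset.range m) x‖) Filter.atTop (nhds 0) := by
  have h1 : Filter.Tendsto (fun m => ‖x - cproj (Finset.range m) x‖^2)
      Filter.atTop (nhds 0) := by
    simp only [nsq_sub_cproj]
    have := (hasSum_nsq x).tendsto_sum_nat
    have h2 := Filter.Tendsto.sub (tendsto_const_nhds (x := ‖x‖^2)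
      (f := Filter.atTop (α := ℕ))) this
    rw [sub_self] at h2
    exact h2
  have h3 : ∀ m, ‖x - cproj (Finset.range m) x‖
      = Real.sqrt (‖x - cproj (Finset.range m) x‖^2) := fun m =>
    (Real.sqrt_sq (norm_nonneg _)).symm
  have h4 := (Real.continuous_sqrt.tendsto 0).comp h1
  rw [Real.sqrt_zero] at h4
  exact Filter.Tendsto.congr (fun m => (h3 m).symm) h4

end Infra2
section Infra3
open Filter Finset

lemma summable_of_disjoint (g : ℕ → L2)
    (hd : ∀ k l, k ≠ l → ∀ j, g k j = 0 ∨ g l j = 0)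
    (hsq : Summable (fun k => ‖g k‖^2)) : Summable g := by
  rw [summable_iff_vanishing_norm]
  intro ε hε
  obtain ⟨s, hs⟩ := summable_iff_vanishing_norm.1 hsq (ε^2) (by positivity)
  refine ⟨s, fun t ht => ?_⟩
  have h1 : ‖∑ k ∈ t, g k‖^2 = ∑ k ∈ t, ‖g k‖^2 :=
    pyth t g (fun k _ l _ hkl => hd k l hkl)
  have h2 : ∑ k ∈ t, ‖g k‖^2 < ε^2 := by
    have := hs t ht
    calc ∑ k ∈ t, ‖g k‖^2 ≤ |∑ k ∈ t, ‖g k‖^2| := le_abs_self _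
    _ = ‖∑ k ∈ t, ‖g k‖^2‖ := (Real.norm_eq_abs _).symm
    _ < ε^2 := this
  nlinarith [norm_nonneg (∑ k ∈ t, g k)]

lemma norm_hasSum_le {g : ℕ → L2} {a : L2} {c : ℝ}
    (h : HasSum g a) (hc : ∀ s : Finset ℕ, ‖∑ k ∈ s, g k‖ ≤ c) : ‖a‖ ≤ c :=
  le_of_tendsto' h.norm hc

/-- support of a block projection. -/
lemma blockProj_support {r : ℕ → ℕ} {k : ℕ} {y : L2} {j : ℕ}
    (h : blockProj r k y j ≠ 0) : r k ≤ j ∧ j < r (k+1) := by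
  rw [blockProj_eq, cproj_apply] at h
  by_cases hm : j ∈ Finset.Ico (r k) (r (k+1))
  · exact Finset.mem_Ico.1 hm
  · rw [if_neg hm] at h; exact absurd rfl h

lemma blockProj_disjoint {r : ℕ → ℕ} (hr : StrictMono r) {k l : ℕ} (hkl : k ≠ l)
    (y z : L2) (j : ℕ) : blockProj r k y j = 0 ∨ blockProj r l z j = 0 := by
  by_contra hcon
  push_neg at hcon
  obtain ⟨h1, h2⟩ := hcon
  obtain ⟨hk1, hk2⟩ := blockProj_support h1
  obtain ⟨hl1, hl2⟩ := blockProj_support h2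
  rcases Nat.lt_or_ge k l with h | h
  · have : r (k+1) ≤ r l := hr.monotone h
    omega
  · have hlk : l < k := by omega
    have : r (l+1) ≤ r k := hr.monotone hlk
    omega

variable {r : ℕ → ℕ}

/-- partial sums of block projections. -/
lemma sum_blockProj (hr0 : r 0 = 0) (hr : StrictMono r) (N : ℕ) (x : L2) :
    ∑ k ∈ Finset.range N, blockProj r k x = cproj (Finset.range (r N)) x := by
  induction N with
  | zero =>
    simp only [Finset.sum_range_zero, hr0, Finset.range_zero]
    exact (cproj_empty x).symm
  | succ N ih =>
    rw [Finset.sum_range_succ, ih]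
    apply lp.ext; funext j
    have hco : (cproj (Finset.range (r N)) x + blockProj r N x : L2) j
        = cproj (Finset.range (r N)) x j + blockProj r N x j := by
      rw [lp.coeFn_add]; rfl
    rw [hco, blockProj_eq, cproj_apply, cproj_apply, cproj_apply]
    have hm : r N ≤ r (N+1) := hr.monotone (Nat.le_succ N)
    simp only [Finset.mem_range, Finset.mem_Ico]
    split_ifs <;> first | (exfalso; omega) | simp

lemma summable_nsq_blockProj (hr0 : r 0 = 0) (hr : StrictMono r) (x : L2) : Summable (fun k => ‖blockProj r k x‖^2) := by
  apply summable_of_sum_range_le (c := ‖x‖^2) (fun k => by positivity)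
  intro n
  rw [← pyth (Finset.range n) (fun k => blockProj r k x)
    (fun k _ l _ hkl => blockProj_disjoint hr hkl x x)]
  rw [sum_blockProj hr0 hr]
  exact nsq_cproj_le _ _

lemma coord_sum_blockProj_le (hr : StrictMono r) (s : Finset ℕ) (x : L2) (j : ℕ) :
    ‖(∑ k ∈ s, blockProj r k x : L2) j‖ ≤ ‖x j‖ := by
  rw [coe_sum_apply]
  by_cases hex : ∃ k ∈ s, blockProj r k x j ≠ 0
  · obtain ⟨k₀, hk₀, hgk₀⟩ := hex
    rw [Finset.sum_eq_single_of_mem k₀ hk₀ (fun l hl hne => by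
      rcases blockProj_disjoint hr (hne : l ≠ k₀) x x j with h | h
      · exact h
      · exact absurd h hgk₀)]
    rw [blockProj_eq, cproj_apply]
    split_ifs
    · exact le_refl _
    · rw [norm_zero]; exact norm_nonneg _
  · push_neg at hex
    rw [Finset.sum_eq_zero hex, norm_zero]
    exact norm_nonneg _

lemma sum_sq_blockProj_le (hr : StrictMono r) (s : Finset ℕ) (x : L2) :
    ∑ k ∈ s, ‖blockProj r k x‖^2 ≤ ‖x‖^2 := by
  have h1 : ∑ k ∈ s, ‖blockProj r k x‖^2 = ‖∑ k ∈ s, blockProj r k x‖^2 :=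
    (pyth s (fun k => blockProj r k x)
      (fun k _ l _ hkl => blockProj_disjoint hr hkl x x)).symm
  rw [h1]
  refine hasSum_le (fun j => ?_) (hasSum_nsq _) (hasSum_nsq x)
  exact pow_le_pow_left₀ (norm_nonneg _) (coord_sum_blockProj_le hr s x j) 2

lemma hasSum_blockProj (hr0 : r 0 = 0) (hr : StrictMono r) (x : L2) : HasSum (fun k => blockProj r k x) x := by
  have hsum : Summable (fun k => blockProj r k x) :=
    summable_of_disjoint _ (fun k l hkl j => blockProj_disjoint hr hkl x x j)
      (summable_nsq_blockProj hr0 hr x)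
  obtain ⟨a, ha⟩ := hsum
  have h1 : Filter.Tendsto (fun N => ∑ k ∈ Finset.range N, blockProj r k x)
      Filter.atTop (nhds a) := ha.tendsto_sum_nat
  have h2 : Filter.Tendsto (fun N => ∑ k ∈ Finset.range N, blockProj r k x)
      Filter.atTop (nhds x) := by
    have h3 : Filter.Tendsto (fun N => ‖x - cproj (Finset.range (r N)) x‖)
        Filter.atTop (nhds 0) :=
      (tendsto_tail x).comp hr.tendsto_atTop
    rw [tendsto_iff_dist_tendsto_zero]
    refine Filter.Tendsto.congr (fun N => ?_) h3
    rw [dist_eq_norm, sum_blockProj hr0 hr, norm_sub_rev]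
  rwa [tendsto_nhds_unique h1 h2] at ha

end Infra3
section Infra4
open Filter Finset

variable {r : ℕ → ℕ}

/-- The `k`-th term of the block-tridiagonal series for `A` at `x`. -/
def gterm (r : ℕ → ℕ) (A : L2 →L[ℂ] L2) (x : L2) (k : ℕ) : L2 :=
  ((if k = 0 then 0 else blockProj r (k - 1)) + blockProj r k + blockProj r (k + 1))
    (A (blockProj r k x))

lemma norm_blockProj_le (k : ℕ) (w : L2) : ‖blockProj r k w‖ ≤ ‖w‖ := by
  rw [blockProj_eq]; exact norm_cproj_le _ _

/-- Generic summability-and-bound statement for disjointly supported families dominated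
by the block decomposition of `x`. -/
lemma family_props (hr0 : r 0 = 0) (hr : StrictMono r) (A : L2 →L[ℂ] L2) (x : L2)
    (f : ℕ → L2)
    (hd : ∀ k l, k ≠ l → ∀ j, f k j = 0 ∨ f l j = 0)
    (hnorm : ∀ k, ‖f k‖ ≤ ‖A‖ * ‖blockProj r k x‖) :
    Summable f ∧ ∀ s : Finset ℕ, ‖∑ k ∈ s, f k‖ ≤ ‖A‖ * ‖x‖ := by
  have hsq : ∀ k, ‖f k‖^2 ≤ ‖A‖^2 * ‖blockProj r k x‖^2 := by
    intro k
    have := pow_le_pow_left₀ (norm_nonneg (f k)) (hnorm k) 2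
    rwa [mul_pow] at this
  have hsum : Summable (fun k => ‖f k‖^2) := by
    refine Summable.of_nonneg_of_le (fun k => by positivity) hsq ?_
    exact (summable_nsq_blockProj hr0 hr x).mul_left _
  constructor
  · exact summable_of_disjoint f hd hsum
  · intro s
    have h1 : ‖∑ k ∈ s, f k‖^2 = ∑ k ∈ s, ‖f k‖^2 :=
      pyth s f (fun k _ l _ hkl => hd k l hkl)
    refine norm_le_of_nsq_le ?_ (mul_nonneg (norm_nonneg A) (norm_nonneg x))
    rw [h1, mul_pow]
    calc ∑ k ∈ s, ‖f k‖^2 ≤ ∑ k ∈ s, ‖A‖^2 * ‖blockProj r k x‖^2 :=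
          Finset.sum_le_sum (fun k _ => hsq k)
    _ = ‖A‖^2 * ∑ k ∈ s, ‖blockProj r k x‖^2 := by rw [Finset.mul_sum]
    _ ≤ ‖A‖^2 * ‖x‖^2 := by
        have := sum_sq_blockProj_le hr s x
        nlinarith [sq_nonneg ‖A‖]

lemma fm_props (hr0 : r 0 = 0) (hr : StrictMono r) (A : L2 →L[ℂ] L2) (x : L2) :
    Summable (fun k => if k = 0 then (0:L2) else blockProj r (k-1) (A (blockProj r k x))) ∧
    ∀ s : Finset ℕ, ‖∑ k ∈ s, (if k = 0 then (0:L2) else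
      blockProj r (k-1) (A (blockProj r k x)))‖ ≤ ‖A‖ * ‖x‖ := by
  apply family_props hr0 hr A x
  · intro k l hkl j
    by_cases hk : k = 0
    · left; simp [hk]
    by_cases hl : l = 0
    · right; simp [hl]
    simp only [if_neg hk, if_neg hl]
    exact blockProj_disjoint hr (by omega) _ _ j
  · intro k
    by_cases hk : k = 0
    · simp only [if_pos hk, norm_zero]
      positivity
    · simp only [if_neg hk]
      calc ‖blockProj r (k-1) (A (blockProj r k x))‖ ≤ ‖A (blockProj r k x)‖ :=
            norm_blockProj_le _ _
      _ ≤ ‖A‖ * ‖blockProj r k x‖ := A.le_opNorm _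

lemma f0_props (hr0 : r 0 = 0) (hr : StrictMono r) (A : L2 →L[ℂ] L2) (x : L2) :
    Summable (fun k => blockProj r k (A (blockProj r k x))) ∧
    ∀ s : Finset ℕ, ‖∑ k ∈ s, blockProj r k (A (blockProj r k x))‖ ≤ ‖A‖ * ‖x‖ := by
  apply family_props hr0 hr A x
  · intro k l hkl j
    exact blockProj_disjoint hr hkl _ _ j
  · intro k
    calc ‖blockProj r k (A (blockProj r k x))‖ ≤ ‖A (blockProj r k x)‖ :=
          norm_blockProj_le _ _
    _ ≤ ‖A‖ * ‖blockProj r k x‖ := A.le_opNorm _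

lemma fp_props (hr0 : r 0 = 0) (hr : StrictMono r) (A : L2 →L[ℂ] L2) (x : L2) :
    Summable (fun k => blockProj r (k+1) (A (blockProj r k x))) ∧
    ∀ s : Finset ℕ, ‖∑ k ∈ s, blockProj r (k+1) (A (blockProj r k x))‖ ≤ ‖A‖ * ‖x‖ := by
  apply family_props hr0 hr A x
  · intro k l hkl j
    exact blockProj_disjoint hr (by omega) _ _ j
  · intro k
    calc ‖blockProj r (k+1) (A (blockProj r k x))‖ ≤ ‖A (blockProj r k x)‖ :=
          norm_blockProj_le _ _
    _ ≤ ‖A‖ * ‖blockProj r k x‖ := A.le_opNorm _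

lemma gterm_eq (A : L2 →L[ℂ] L2) (x : L2) (k : ℕ) :
    gterm r A x k = (if k = 0 then (0:L2) else blockProj r (k-1) (A (blockProj r k x)))
      + blockProj r k (A (blockProj r k x)) + blockProj r (k+1) (A (blockProj r k x)) := by
  rw [gterm, ContinuousLinearMap.add_apply, ContinuousLinearMap.add_apply]
  congr 2
  by_cases hk : k = 0
  · simp [hk]
  · simp [hk]

lemma hasSum_gterm (hr0 : r 0 = 0) (hr : StrictMono r) (A : L2 →L[ℂ] L2) (x : L2) :
    HasSum (gterm r A x) (∑' k, gterm r A x k) := by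
  have h1 := ((fm_props hr0 hr A x).1.hasSum.add (f0_props hr0 hr A x).1.hasSum).add
    (fp_props hr0 hr A x).1.hasSum
  have h2 : (gterm r A x) = fun k =>
      ((if k = 0 then (0:L2) else blockProj r (k-1) (A (blockProj r k x)))
      + blockProj r k (A (blockProj r k x))) + blockProj r (k+1) (A (blockProj r k x)) := by
    funext k; rw [gterm_eq]
  rw [h2]
  exact h1.summable.hasSum

lemma norm_tsum_gterm_le (hr0 : r 0 = 0) (hr : StrictMono r) (A : L2 →L[ℂ] L2) (x : L2) :
    ‖∑' k, gterm r A x k‖ ≤ 3 * ‖A‖ * ‖x‖ := by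
  have hm := (fm_props hr0 hr A x).1.hasSum
  have h0 := (f0_props hr0 hr A x).1.hasSum
  have hp := (fp_props hr0 hr A x).1.hasSum
  have h1 := (hm.add h0).add hp
  have h2 : (∑' k, gterm r A x k) = (∑' k, (if k = 0 then (0:L2) else
      blockProj r (k-1) (A (blockProj r k x)))) + (∑' k, blockProj r k (A (blockProj r k x)))
      + (∑' k, blockProj r (k+1) (A (blockProj r k x))) := by
    refine (hasSum_gterm hr0 hr A x).unique ?_
    have h3 : (gterm r A x) = fun k =>
        ((if k = 0 then (0:L2) else blockProj r (k-1) (A (blockProj r k x)))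
        + blockProj r k (A (blockProj r k x))) + blockProj r (k+1) (A (blockProj r k x)) := by
      funext k; rw [gterm_eq]
    rw [h3]
    exact h1
  rw [h2]
  have bm := norm_hasSum_le hm (fm_props hr0 hr A x).2
  have b0 := norm_hasSum_le h0 (f0_props hr0 hr A x).2
  have bp := norm_hasSum_le hp (fp_props hr0 hr A x).2
  calc ‖_ + _ + _‖ ≤ ‖_ + _‖ + ‖_‖ := norm_add_le _ _
  _ ≤ ‖_‖ + ‖_‖ + ‖_‖ := by gcongr; exact norm_add_le _ _
  _ ≤ (‖A‖ * ‖x‖) + (‖A‖ * ‖x‖) + (‖A‖ * ‖x‖) := by gcongr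
  _ = 3 * ‖A‖ * ‖x‖ := by ring

set_option maxHeartbeats 1000000 in
/-- The block-tridiagonal compression of `A`. -/
def Dop (hr0 : r 0 = 0) (hr : StrictMono r) (A : L2 →L[ℂ] L2) : L2 →L[ℂ] L2 :=
  LinearMap.mkContinuous
    { toFun := fun x => ∑' k, gterm r A x k
      map_add' := fun x y => by
        have h1 := hasSum_gterm hr0 hr A x
        have h2 := hasSum_gterm hr0 hr A y
        refine (hasSum_gterm hr0 hr A (x + y)).unique ?_
        have h3 : gterm r A (x + y) = fun k => gterm r A x k + gterm r A y k := by
          funext k; simp only [gterm, map_add]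
        rw [h3]
        exact h1.add h2
      map_smul' := fun c x => by
        simp only [RingHom.id_apply]
        refine (hasSum_gterm hr0 hr A (c • x)).unique ?_
        have h3 : gterm r A (c • x) = fun k => c • gterm r A x k := by
          funext k; simp only [gterm, map_smul]
        rw [h3]
        exact (hasSum_gterm hr0 hr A x).const_smul c }
    (3 * ‖A‖) (fun x => norm_tsum_gterm_le hr0 hr A x)

lemma hasSum_Dop (hr0 : r 0 = 0) (hr : StrictMono r) (A : L2 →L[ℂ] L2) (x : L2) :
    HasSum (gterm r A x) (Dop hr0 hr A x) :=
  hasSum_gterm hr0 hr A x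

lemma norm_Dop_le (hr0 : r 0 = 0) (hr : StrictMono r) (A : L2 →L[ℂ] L2) :
    ‖Dop hr0 hr A‖ ≤ 3 * ‖A‖ :=
  LinearMap.mkContinuous_norm_le _ (by positivity) _

lemma Dop_add (hr0 : r 0 = 0) (hr : StrictMono r) (A B : L2 →L[ℂ] L2) :
    Dop hr0 hr (A + B) = Dop hr0 hr A + Dop hr0 hr B := by
  refine ContinuousLinearMap.ext fun x => ?_
  refine (hasSum_Dop hr0 hr (A + B) x).unique ?_
  have h3 : gterm r (A + B) x = fun k => gterm r A x k + gterm r B x k := by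
    funext k
    simp only [gterm, ContinuousLinearMap.add_apply, map_add]
  rw [h3]
  exact (hasSum_Dop hr0 hr A x).add (hasSum_Dop hr0 hr B x)

end Infra4
section Infra5
open Filter Finset ContinuousLinearMap

local notation "⟪" x ", " y "⟫" => @inner ℂ _ _ x y

/-- Projection onto the first `m` coordinates. -/
def pm (m : ℕ) : L2 →L[ℂ] L2 := cproj (Finset.range m)

lemma esingle_smul (i : ℕ) (c : ℂ) :
    (lp.single 2 i c : L2) = c • (lp.single 2 i (1:ℂ) : L2) := by
  rw [← lp.single_smul]
  norm_num

lemma cproj_eq_sum_smul (s : Finset ℕ) (x : L2) :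
    cproj s x = ∑ i ∈ s, x i • (lp.single 2 i (1:ℂ) : L2) := by
  rw [cproj, ContinuousLinearMap.sum_apply]
  refine Finset.sum_congr rfl fun i _ => ?_
  exact esingle_smul i (x i)

lemma adjoint_cproj (s : Finset ℕ) :
    ContinuousLinearMap.adjoint (cproj s) = cproj s := by
  symm
  rw [ContinuousLinearMap.eq_adjoint_iff]
  intro x y
  have hx : ⟪cproj s x, y⟫ = ∑ i ∈ s, ⟪x i, y i⟫ := by
    rw [cproj_eq_sum_smul, sum_inner]
    refine Finset.sum_congr rfl fun i _ => ?_
    rw [← esingle_smul, lp.inner_single_left]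
  have hy : ⟪x, cproj s y⟫ = ∑ i ∈ s, ⟪x i, y i⟫ := by
    rw [cproj_eq_sum_smul, inner_sum]
    refine Finset.sum_congr rfl fun i _ => ?_
    rw [← esingle_smul, lp.inner_single_right]
  rw [hx, hy]

/-- The key smallness condition: `(1 - P_{m'}) A P_m` is pointwise small. -/
def Est (A : L2 →L[ℂ] L2) (m m' : ℕ) (ε : ℝ) : Prop :=
  ∀ x : L2, ‖A (pm m x) - pm m' (A (pm m x))‖ ≤ ε * ‖x‖

lemma est_eventually (A : L2 →L[ℂ] L2) (m : ℕ) {ε : ℝ} (hε : 0 < ε) :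
    ∀ᶠ m' in Filter.atTop, Est A m m' ε := by
  set δ : ℝ := ε / (m + 1) with hδ
  have hδ0 : 0 < δ := by positivity
  have hev : ∀ᶠ m' in Filter.atTop, ∀ i ∈ Finset.range m,
      ‖A (lp.single 2 i (1:ℂ)) - cproj (Finset.range m') (A (lp.single 2 i (1:ℂ)))‖ < δ := by
    rw [Filter.eventually_all_finset]
    intro i _
    exact (tendsto_tail (A (lp.single 2 i (1:ℂ)))).eventually (gt_mem_nhds hδ0)
  filter_upwards [hev] with m' hm' x
  have hrepr : A (pm m x) - pm m' (A (pm m x))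
      = ∑ i ∈ Finset.range m, x i • (A (lp.single 2 i (1:ℂ))
        - cproj (Finset.range m') (A (lp.single 2 i (1:ℂ)))) := by
    rw [pm, cproj_eq_sum_smul, map_sum]
    rw [show (pm m' (∑ i ∈ Finset.range m, A (x i • (lp.single 2 i (1:ℂ)))))
        = ∑ i ∈ Finset.range m, pm m' (A (x i • (lp.single 2 i (1:ℂ)))) from
      map_sum (pm m') _ _]
    rw [← Finset.sum_sub_distrib]
    refine Finset.sum_congr rfl fun i _ => ?_
    rw [map_smul, map_smul, smul_sub]
    rfl
  rw [hrepr]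
  calc ‖∑ i ∈ Finset.range m, x i • (A (lp.single 2 i (1:ℂ))
        - cproj (Finset.range m') (A (lp.single 2 i (1:ℂ))))‖
      ≤ ∑ i ∈ Finset.range m, ‖x i • (A (lp.single 2 i (1:ℂ))
        - cproj (Finset.range m') (A (lp.single 2 i (1:ℂ))))‖ := norm_sum_le _ _
  _ ≤ ∑ i ∈ Finset.range m, ‖x‖ * δ := by
      refine Finset.sum_le_sum fun i hi => ?_
      rw [norm_smul]
      have h1 : ‖x i‖ ≤ ‖x‖ := lp.norm_apply_le_norm (by norm_num) x i
      have h2 := le_of_lt (hm' i hi)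
      exact mul_le_mul h1 h2 (norm_nonneg _) (norm_nonneg _)
  _ = m * (‖x‖ * δ) := by rw [Finset.sum_const, Finset.card_range, nsmul_eq_mul]
  _ ≤ ε * ‖x‖ := by
      rw [hδ]
      have hm1 : (0:ℝ) < m + 1 := by positivity
      have hnx := norm_nonneg x
      rw [div_eq_mul_one_div, mul_comm ε (1 / ((m:ℝ) + 1))]
      have key : (m:ℝ) * (1 / ((m:ℝ)+1)) ≤ 1 := by
        rw [mul_one_div, div_le_one hm1]; linarith
      calc (m:ℝ) * (‖x‖ * (1 / ((m:ℝ) + 1) * ε)) = ((m:ℝ) * (1 / ((m:ℝ)+1))) * (ε * ‖x‖) := by ring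
      _ ≤ 1 * (ε * ‖x‖) := by
          refine mul_le_mul_of_nonneg_right key ?_
          positivity
      _ = ε * ‖x‖ := one_mul _

lemma est_adjoint {A : L2 →L[ℂ] L2} {m m' : ℕ} {ε : ℝ} (hε : 0 ≤ ε)
    (h : Est (ContinuousLinearMap.adjoint A) m m' ε) :
    ∀ x : L2, ‖pm m (A (x - pm m' x))‖ ≤ ε * ‖x‖ := by
  set G : L2 →L[ℂ] L2 := (pm m).comp (A.comp (ContinuousLinearMap.id ℂ L2 - pm m')) with hG
  have hGx : ∀ x : L2, G x = pm m (A (x - pm m' x)) := fun x => by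
    simp [hG, ContinuousLinearMap.comp_apply, ContinuousLinearMap.sub_apply]
  have hadj : ContinuousLinearMap.adjoint G
      = ((ContinuousLinearMap.id ℂ L2 - pm m').comp
          ((ContinuousLinearMap.adjoint A).comp (pm m))) := by
    rw [hG, ContinuousLinearMap.adjoint_comp, ContinuousLinearMap.adjoint_comp]
    rw [map_sub, ContinuousLinearMap.adjoint_id]
    rw [show ContinuousLinearMap.adjoint (pm m) = pm m from adjoint_cproj _,
      show ContinuousLinearMap.adjoint (pm m') = pm m' from adjoint_cproj _]
    rw [ContinuousLinearMap.comp_assoc]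
  have h1 : ‖ContinuousLinearMap.adjoint G‖ ≤ ε := by
    refine ContinuousLinearMap.opNorm_le_bound _ hε fun x => ?_
    rw [hadj]
    have : ((ContinuousLinearMap.id ℂ L2 - pm m').comp
        ((ContinuousLinearMap.adjoint A).comp (pm m))) x
        = (ContinuousLinearMap.adjoint A) (pm m x)
          - pm m' ((ContinuousLinearMap.adjoint A) (pm m x)) := by
      simp [ContinuousLinearMap.comp_apply, ContinuousLinearMap.sub_apply]
    rw [this]
    exact h x
  have h2 : ‖G‖ ≤ ε := by
    have := LinearIsometryEquiv.norm_map
      (ContinuousLinearMap.adjoint (E := L2) (F := L2) (𝕜 := ℂ)) G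
    rw [← this]
    exact h1
  intro x
  rw [← hGx]
  exact (G.le_opNorm x).trans (mul_le_mul_of_nonneg_right h2 (norm_nonneg x))

end Infra5
section Infra6
open Filter Finset

lemma exists_next (A : ℕ → (L2 →L[ℂ] L2)) (k m : ℕ) :
    ∃ m', m < m' ∧ ∀ n, n ≤ k → Est (A n) m m' ((1/2:ℝ)^k) := by
  have h1 : ∀ᶠ m' in Filter.atTop, ∀ n ∈ Finset.range (k+1), Est (A n) m m' ((1/2:ℝ)^k) := by
    rw [Filter.eventually_all_finset]
    intro n _
    exact est_eventually (A n) m (by positivity)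
  obtain ⟨m', hm'⟩ := ((Filter.eventually_gt_atTop m).and h1).exists
  exact ⟨m', hm'.1, fun n hn => hm'.2 n (Finset.mem_range.2 (by omega))⟩

/-- The sequence of cut points, chosen adaptively for the countable family `A`. -/
noncomputable def rseq (A : ℕ → (L2 →L[ℂ] L2)) : ℕ → ℕ
  | 0 => 0
  | (k+1) => (exists_next A k (rseq A k)).choose

lemma rseq_zero (A : ℕ → (L2 →L[ℂ] L2)) : rseq A 0 = 0 := rfl

lemma rseq_mono (A : ℕ → (L2 →L[ℂ] L2)) : StrictMono (rseq A) := by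
  apply strictMono_nat_of_lt_succ
  intro k
  exact (exists_next A k (rseq A k)).choose_spec.1

lemma rseq_est (A : ℕ → (L2 →L[ℂ] L2)) {n k : ℕ} (hnk : n ≤ k) :
    Est (A n) (rseq A k) (rseq A (k+1)) ((1/2:ℝ)^k) :=
  (exists_next A k (rseq A k)).choose_spec.2 n hnk

/-- Rank-one operators are compact. -/
lemma isCompactOperator_smul (φ : L2 →L[ℂ] ℂ) (v : L2) :
    IsCompactOperator (fun x : L2 => φ x • v) := by
  refine ⟨(fun c : ℂ => c • v) '' Metric.closedBall 0 ‖φ‖, ?_, ?_⟩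
  · exact (isCompact_closedBall _ _).image (continuous_id.smul continuous_const)
  · refine Filter.mem_of_superset (Metric.ball_mem_nhds 0 one_pos) ?_
    intro x hx
    refine ⟨φ x, ?_, rfl⟩
    rw [Metric.mem_closedBall, dist_zero_right]
    calc ‖φ x‖ ≤ ‖φ‖ * ‖x‖ := φ.le_opNorm x
    _ ≤ ‖φ‖ * 1 := by
        refine mul_le_mul_of_nonneg_left ?_ (norm_nonneg φ)
        rw [Metric.mem_ball, dist_zero_right] at hx
        exact le_of_lt hx
    _ = ‖φ‖ := mul_one _

lemma isCompactOperator_sum_smul (s : Finset ℕ) :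
    IsCompactOperator (fun x : L2 => ∑ i ∈ s, (lpProj (E := fun _ : ℕ => ℂ) 2 i) x
      • (lp.single 2 i (1:ℂ) : L2)) := by
  induction s using Finset.cons_induction with
  | empty => simpa [Pi.zero_def] using isCompactOperator_zero
  | cons a s ha ih =>
    simp only [Finset.sum_cons]
    exact (isCompactOperator_smul (lpProj 2 a) _).add ih

lemma isCompactOperator_cproj (s : Finset ℕ) : IsCompactOperator ⇑(cproj s) := by
  have h : ⇑(cproj s) = fun x : L2 => ∑ i ∈ s, (lpProj (E := fun _ : ℕ => ℂ) 2 i) x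
      • (lp.single 2 i (1:ℂ) : L2) := by
    funext x
    rw [cproj_eq_sum_smul]
    rfl
  rw [h]
  exact isCompactOperator_sum_smul s

lemma isCompactOperator_comp_cproj (C : L2 →L[ℂ] L2) (s : Finset ℕ) :
    IsCompactOperator ⇑(C.comp (cproj s)) := by
  have h : ⇑(C.comp (cproj s)) = ⇑C ∘ ⇑(cproj s) := by rfl
  rw [h]
  exact (isCompactOperator_cproj s).continuous_comp C.continuous

end Infra6
section Infra7
open Filter Finset

lemma cproj_union_apply {s t : Finset ℕ} (h : Disjoint s t) (x : L2) :
    cproj (s ∪ t) x = cproj s x + cproj t x := by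
  rw [cproj, cproj, cproj, Finset.sum_union h]
  rfl

lemma cproj_Ico_add {a b c : ℕ} (hab : a ≤ b) (hbc : b ≤ c) (x : L2) :
    cproj (Finset.Ico a b) x + cproj (Finset.Ico b c) x = cproj (Finset.Ico a c) x := by
  rw [← Finset.Ico_union_Ico_eq_Ico hab hbc,
    cproj_union_apply (Finset.Ico_disjoint_Ico_consecutive a b c)]

/-- Splitting of three consecutive block projections. -/
lemma tridiag_split {r : ℕ → ℕ} (hr : StrictMono r) {k : ℕ} (hk : 1 ≤ k) (w : L2) :
    blockProj r (k-1) w + blockProj r k w + blockProj r (k+1) w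
      = cproj (Finset.range (r (k+2))) w - cproj (Finset.range (r (k-1))) w := by
  have hk1 : k - 1 + 1 = k := Nat.sub_add_cancel hk
  have h1 : r (k-1) ≤ r k := hr.monotone (by omega)
  have h2 : r k ≤ r (k+1) := hr.monotone (by omega)
  have h3 : r (k+1) ≤ r (k+2) := hr.monotone (by omega)
  have hL : blockProj r (k-1) w + blockProj r k w + blockProj r (k+1) w
      = cproj (Finset.Ico (r (k-1)) (r (k+2))) w := by
    rw [blockProj_eq, blockProj_eq, blockProj_eq, hk1]
    rw [cproj_Ico_add h1 h2, cproj_Ico_add (le_trans h1 h2) h3]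
  rw [hL]
  have hR : cproj (Finset.range (r (k-1))) w + cproj (Finset.Ico (r (k-1)) (r (k+2))) w
      = cproj (Finset.range (r (k+2))) w := by
    rw [Finset.range_eq_Ico, Finset.range_eq_Ico]
    exact cproj_Ico_add (Nat.zero_le _) (le_trans h1 (le_trans h2 h3)) w
  rw [← hR]
  abel

lemma pm_blockProj {r : ℕ → ℕ} (k : ℕ) (y : L2) :
    pm (r (k+1)) (blockProj r k y) = blockProj r k y := by
  rw [pm, blockProj_eq, cproj_cproj]
  have hst : Finset.range (r (k+1)) ∩ Finset.Ico (r k) (r (k+1))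
      = Finset.Ico (r k) (r (k+1)) := by
    refine Finset.inter_eq_right.2 fun j hj => ?_
    rw [Finset.mem_range]
    exact (Finset.mem_Ico.1 hj).2
  rw [hst]

lemma pm_blockProj_zero {r : ℕ → ℕ} (k : ℕ) (y : L2) :
    pm (r k) (blockProj r k y) = 0 := by
  rw [pm, blockProj_eq, cproj_cproj]
  have : Finset.range (r k) ∩ Finset.Ico (r k) (r (k+1)) = ∅ := by
    ext j
    simp only [Finset.mem_inter, Finset.mem_range, Finset.mem_Ico, Finset.notMem_empty,
      iff_false]
    omega
  rw [this]
  exact cproj_empty y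

set_option maxHeartbeats 2000000 in
/-- The main compactness estimate for members of the adaptive family. -/
lemma compact_of_family (A : ℕ → (L2 →L[ℂ] L2)) (n n' : ℕ)
    (hAdj : A n' = ContinuousLinearMap.adjoint (A n)) :
    IsCompactOperator ⇑(A n - Dop (rseq_zero A) (rseq_mono A) (A n)) := by
  set r := rseq A with hrdef
  have hr0 : r 0 = 0 := rseq_zero A
  have hr : StrictMono r := rseq_mono A
  set T := A n with hT
  set C : L2 →L[ℂ] L2 := T - Dop (rseq_zero A) (rseq_mono A) T with hC
  set N₀ : ℕ := max n n' + 1 with hN₀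
  -- the key pointwise bound
  have key : ∀ N, N₀ ≤ N → ∀ x : L2, ‖C x - C (pm (r N) x)‖ ≤ 6 * (1/2)^N * ‖x‖ := by
    intro N hN x
    set y : L2 := x - pm (r N) x with hy
    have hyx : C x - C (pm (r N) x) = C y := (map_sub C x (pm (r N) x)).symm
    rw [hyx]
    have hynorm : ‖y‖ ≤ ‖x‖ := norm_sub_cproj_le _ x
    -- vanishing of low blocks
    have hQy0 : ∀ k, k < N → blockProj r k y = 0 := by
      intro k hk
      apply lp.ext; funext j
      rw [blockProj_eq, cproj_apply]
      have hz : ((0:L2) : ∀ _ : ℕ, ℂ) j = 0 := rfl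
      rw [hz]
      split_ifs with hmem
      · have hlt : j < r N := by
          have := (Finset.mem_Ico.1 hmem).2
          have h2 : r (k+1) ≤ r N := hr.monotone (by omega)
          omega
        rw [hy]
        have := sub_cproj_apply (Finset.range (r N)) x j
        rw [show (pm (r N)) = cproj (Finset.range (r N)) from rfl] at *
        rw [this, if_pos (Finset.mem_range.2 hlt)]
      · rfl
    -- the tail series
    have hTy : HasSum (fun k => T (blockProj r k y)) (T y) :=
      (hasSum_blockProj hr0 hr y).mapL T
    have hDy : HasSum (gterm r T y) (Dop (rseq_zero A) (rseq_mono A) T y) :=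
      hasSum_Dop (rseq_zero A) (rseq_mono A) T y
    have hCy : HasSum (fun k => T (blockProj r k y) - gterm r T y k) (C y) := by
      have := hTy.sub hDy
      rwa [show T y - Dop (rseq_zero A) (rseq_mono A) T y = C y from
        (ContinuousLinearMap.sub_apply _ _ _).symm] at this
    set t : ℕ → L2 := fun k => T (blockProj r k y) - gterm r T y k with htdef
    have ht0 : ∀ k, k < N → t k = 0 := by
      intro k hk
      rw [htdef]
      simp only [gterm, hQy0 k hk, map_zero, sub_zero]
    have htail : HasSum (fun i => t (i + N)) (C y) := by
      refine (hasSum_nat_add_iff N).2 ?_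
      rwa [Finset.sum_eq_zero (fun i hi => ht0 i (Finset.mem_range.1 hi)), add_zero]
    -- bound on tail terms
    have hbound : ∀ i, ‖t (i + N)‖ ≤ (3 * (1/2)^N * ‖x‖) * (1/2)^i := by
      intro i
      set k : ℕ := i + N with hkdef
      have hk1 : 1 ≤ k := by omega
      have hkn : n ≤ k + 1 := by omega
      have hkn' : n' ≤ k - 1 := by omega
      set w : L2 := T (blockProj r k y) with hw
      -- rewrite t k
      have htk : t k = (w - pm (r (k+2)) w) + pm (r (k-1)) w := by
        rw [htdef]
        simp only
        rw [gterm]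
        have hne : ¬ (k = 0) := by omega
        rw [if_neg hne]
        rw [ContinuousLinearMap.add_apply, ContinuousLinearMap.add_apply]
        have := tridiag_split hr hk1 (T (blockProj r k y))
        rw [← hw] at this ⊢
        rw [show blockProj r (k-1) w + blockProj r k w + blockProj r (k+1) w
          = cproj (Finset.range (r (k+2))) w - cproj (Finset.range (r (k-1))) w from this]
        rw [show cproj (Finset.range (r (k+2))) = pm (r (k+2)) from rfl,
          show cproj (Finset.range (r (k-1))) = pm (r (k-1)) from rfl]
        abel
      -- first bound
      have hb1 : ‖w - pm (r (k+2)) w‖ ≤ (1/2)^(k+1) * ‖blockProj r k y‖ := by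
        have hest := rseq_est A hkn
        have h5 := hest (blockProj r k y)
        rw [show rseq A = r from rfl] at h5
        rw [pm_blockProj k y] at h5
        exact h5
      -- second bound
      have hb2 : ‖pm (r (k-1)) w‖ ≤ (1/2)^(k-1) * ‖blockProj r k y‖ := by
        have hest := rseq_est A hkn'
        rw [hAdj] at hest
        have hk2 : (k - 1) + 1 = k := Nat.sub_add_cancel hk1
        rw [hk2] at hest
        have h5 := est_adjoint (by positivity) hest (blockProj r k y)
        rw [show rseq A = r from rfl] at h5
        rw [pm_blockProj_zero k y, sub_zero] at h5
        exact h5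
      have hby : ‖blockProj r k y‖ ≤ ‖x‖ := (norm_blockProj_le k y).trans hynorm
      have harith : (1/2:ℝ)^(k+1) + (1/2)^(k-1) ≤ 3 * (1/2)^k := by
        have hk2 : (k - 1) + 1 = k := Nat.sub_add_cancel hk1
        have e1 : (1/2:ℝ)^(k+1) = (1/2)^k * (1/2) := pow_succ _ _
        have e2 : (1/2:ℝ)^k = (1/2)^(k-1) * (1/2) := by rw [← pow_succ, hk2]
        nlinarith [pow_nonneg (by norm_num : (0:ℝ) ≤ 1/2) k,
          pow_nonneg (by norm_num : (0:ℝ) ≤ 1/2) (k-1)]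
      calc ‖t k‖ ≤ ‖w - pm (r (k+2)) w‖ + ‖pm (r (k-1)) w‖ := by
            rw [htk]; exact norm_add_le _ _
      _ ≤ (1/2)^(k+1) * ‖blockProj r k y‖ + (1/2)^(k-1) * ‖blockProj r k y‖ :=
            add_le_add hb1 hb2
      _ = ((1/2)^(k+1) + (1/2)^(k-1)) * ‖blockProj r k y‖ := by ring
      _ ≤ (3 * (1/2)^k) * ‖x‖ := by
            refine mul_le_mul harith hby (norm_nonneg _) ?_
            positivity
      _ = (3 * (1/2)^N * ‖x‖) * (1/2)^i := by
            rw [hkdef, pow_add]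
            ring
    -- sum the bounds
    have hgeo : Summable (fun i => (3 * (1/2:ℝ)^N * ‖x‖) * (1/2)^i) :=
      summable_geometric_two.mul_left _
    have hnorms : Summable (fun i => ‖t (i + N)‖) :=
      Summable.of_nonneg_of_le (fun i => norm_nonneg _) hbound hgeo
    calc ‖C y‖ = ‖∑' i, t (i + N)‖ := by rw [htail.tsum_eq]
    _ ≤ ∑' i, ‖t (i + N)‖ := norm_tsum_le_tsum_norm hnorms
    _ ≤ ∑' i, (3 * (1/2:ℝ)^N * ‖x‖) * (1/2)^i := Summable.tsum_le_tsum hbound hnorms hgeo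
    _ = (3 * (1/2:ℝ)^N * ‖x‖) * ∑' i, (1/2:ℝ)^i := tsum_mul_left
    _ = (3 * (1/2:ℝ)^N * ‖x‖) * 2 := by rw [tsum_geometric_two]
    _ = 6 * (1/2)^N * ‖x‖ := by ring
  -- operator-norm convergence
  have hop : ∀ N, N₀ ≤ N → ‖C - C.comp (pm (r N))‖ ≤ 6 * (1/2)^N := by
    intro N hN
    refine ContinuousLinearMap.opNorm_le_bound _ (by positivity) fun x => ?_
    have : (C - C.comp (pm (r N))) x = C x - C (pm (r N) x) := rfl
    rw [this]
    exact key N hN x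
  have htendC : Filter.Tendsto (fun N => C.comp (pm (r N))) Filter.atTop (nhds C) := by
    rw [tendsto_iff_dist_tendsto_zero]
    have hb : ∀ᶠ N in Filter.atTop, dist (C.comp (pm (r N))) C ≤ 6 * (1/2)^N := by
      filter_upwards [Filter.eventually_ge_atTop N₀] with N hN
      rw [dist_eq_norm, ← norm_neg, neg_sub]
      exact hop N hN
    have hgros : Filter.Tendsto (fun N : ℕ => 6 * (1/2:ℝ)^N) Filter.atTop (nhds 0) := by
      have := (tendsto_pow_atTop_nhds_zero_of_lt_one
        (by norm_num : (0:ℝ) ≤ 1/2) (by norm_num : (1/2:ℝ) < 1)).const_mul (6:ℝ)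
      simpa using this
    refine tendsto_of_tendsto_of_tendsto_of_le_of_le' tendsto_const_nhds hgros ?_ hb
    exact Filter.Eventually.of_forall fun N => dist_nonneg
  exact isCompactOperator_of_tendsto htendC
    (Filter.Eventually.of_forall fun N => isCompactOperator_comp_cproj C _)

end Infra7

set_option maxHeartbeats 1000000 in
set_option synthInstance.maxHeartbeats 400000 in
theorem statement_2 (𝓑 : Set (L2 →L[ℂ] L2)) (h𝓑 : TopologicalSpace.IsSeparable 𝓑) :
    ∃ r : ℕ → ℕ, r 0 = 0 ∧ StrictMono r ∧
      ∀ T ∈ 𝓑, ∃ D : L2 →L[ℂ] L2,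
        (∀ x : L2, HasSum
          (fun k => ((if k = 0 then 0 else blockProj r (k - 1)) + blockProj r k +
            blockProj r (k + 1)) (T (blockProj r k x))) (D x)) ∧
        IsCompactOperator ⇑(T - D) := by
  classical
  obtain ⟨c, hc_count, hc_sub⟩ := h𝓑
  rcases Set.eq_empty_or_nonempty c with hcE | hcN
  · refine ⟨id, rfl, strictMono_id, fun T hT => absurd (hc_sub hT) ?_⟩
    rw [hcE, closure_empty]
    exact Set.notMem_empty T
  · obtain ⟨e, hce⟩ := hc_count.exists_eq_range hcN
    set A : ℕ → (L2 →L[ℂ] L2) := fun n =>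
      if Even n then e (n/2) else ContinuousLinearMap.adjoint (e (n/2)) with hA
    have hAe : ∀ j, A (2*j) = e j := by
      intro j
      rw [hA]
      simp only
      rw [if_pos (even_two_mul j)]
      congr 1
      omega
    have hAo : ∀ j, A (2*j+1) = ContinuousLinearMap.adjoint (e j) := by
      intro j
      rw [hA]
      simp only
      rw [if_neg (by simp [parity_simps])]
      congr 2
      omega
    have hr0 := rseq_zero A
    have hrm := rseq_mono A
    refine ⟨rseq A, hr0, hrm, ?_⟩
    intro T hT
    refine ⟨Dop hr0 hrm T, fun x => hasSum_Dop hr0 hrm T x, ?_⟩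
    -- every member of the family is compact after compression
    have hmem : ∀ m, IsCompactOperator ⇑(A m - Dop hr0 hrm (A m)) := by
      intro m
      rcases Nat.even_or_odd m with hm | hm
      · obtain ⟨j, hj⟩ := hm
        have hmj : m = 2*j := by omega
        have h1 : A (2*j+1) = ContinuousLinearMap.adjoint (A m) := by
          rw [hAo, hmj, hAe]
        exact compact_of_family A m (2*j+1) h1
      · obtain ⟨j, hj⟩ := hm
        have h1 : A (2*j) = ContinuousLinearMap.adjoint (A m) := by
          rw [hAe, hj, hAo, ContinuousLinearMap.adjoint_adjoint]
        exact compact_of_family A m (2*j) h1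
    -- difference of compressions
    have hDdiff : ∀ S S' : L2 →L[ℂ] L2,
        Dop hr0 hrm S - Dop hr0 hrm S' = Dop hr0 hrm (S - S') := by
      intro S S'
      have e1 : S' + (S - S') = S := by abel
      have e2 := Dop_add hr0 hrm S' (S - S')
      rw [e1] at e2
      rw [e2]
      abel
    -- approximate T by members of the family
    have hTcl : T ∈ closure (Set.range A) := by
      refine closure_mono ?_ (hc_sub hT)
      rw [hce]
      rintro S ⟨j, rfl⟩
      exact ⟨2*j, hAe j⟩
    obtain ⟨u, hu_mem, hu_lim⟩ := mem_closure_iff_seq_limit.1 hTcl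
    have hdist : ∀ j, dist (u j - Dop hr0 hrm (u j)) (T - Dop hr0 hrm T)
        ≤ 4 * dist (u j) T := by
      intro j
      rw [dist_eq_norm, dist_eq_norm]
      have e3 : (u j - Dop hr0 hrm (u j)) - (T - Dop hr0 hrm T)
          = (u j - T) - (Dop hr0 hrm (u j) - Dop hr0 hrm T) := by abel
      rw [e3, hDdiff]
      calc ‖(u j - T) - Dop hr0 hrm (u j - T)‖
          ≤ ‖u j - T‖ + ‖Dop hr0 hrm (u j - T)‖ := norm_sub_le _ _
      _ ≤ ‖u j - T‖ + 3 * ‖u j - T‖ := by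
          have := norm_Dop_le hr0 hrm (u j - T)
          linarith
      _ = 4 * ‖u j - T‖ := by ring
    have htendD : Filter.Tendsto (fun j => u j - Dop hr0 hrm (u j)) Filter.atTop
        (nhds (T - Dop hr0 hrm T)) := by
      rw [tendsto_iff_dist_tendsto_zero]
      have h4 : Filter.Tendsto (fun j => 4 * dist (u j) T) Filter.atTop (nhds 0) := by
        have := (tendsto_iff_dist_tendsto_zero.1 hu_lim).const_mul (4:ℝ)
        simpa using this
      refine tendsto_of_tendsto_of_tendsto_of_le_of_le tendsto_const_nhds h4
        (fun j => dist_nonneg) hdist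
    exact isCompactOperator_of_tendsto htendD
      (Filter.Eventually.of_forall fun j => by
        obtain ⟨m, hmj⟩ := hu_mem j
        rw [← hmj]
        exact hmem m)

end Paper
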